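/- There exists a constant C > 0 such that for all τ ∈ ℝ, all integers k, l ∈ ℤ, and all natural numbers m ≥ 1, setting Λ_m = k² + (m² + (m+1)²)/2, one has |(iτ + k² + l² − Λ_m)⁻¹ · (k² + l²)/(Λ_m + iτ)| ≤ C / √(m² + τ²). -/

import Mathlib

/-- Pure real inequality behind the bound. -/
lemma low_to_high_real (d Λ τ mr : ℝ) (h1 : 1 ≤ mr) (hdm : mr ≤ |d|)
    (hΛm : mr ≤ Λ) (hA : 0 ≤ Λ + d) :
    (Real.sqrt (d ^ 2 + τ ^ 2))⁻¹ * ((Λ + d) / Real.sqrt (Λ ^ 2 + τ ^ 2)) ≤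
      2 / Real.sqrt (mr ^ 2 + τ ^ 2) := by
  have hm0 : (0:ℝ) < mr := lt_of_lt_of_le one_pos h1
  set S1 := Real.sqrt (d ^ 2 + τ ^ 2) with hS1
  set S2 := Real.sqrt (Λ ^ 2 + τ ^ 2) with hS2
  set T := Real.sqrt (mr ^ 2 + τ ^ 2) with hT
  have hT0 : 0 < T := Real.sqrt_pos.2 (by positivity)
  have hTS1 : T ≤ S1 := by
    apply Real.sqrt_le_sqrt
    have : mr ^ 2 ≤ d ^ 2 := by
      calc mr ^ 2 ≤ |d| ^ 2 := by
            exact pow_le_pow_left₀ hm0.le hdm 2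
        _ = d ^ 2 := sq_abs d
    linarith
  have hTS2 : T ≤ S2 := by
    apply Real.sqrt_le_sqrt
    have : mr ^ 2 ≤ Λ ^ 2 := pow_le_pow_left₀ hm0.le hΛm 2
    linarith
  have hS10 : 0 < S1 := lt_of_lt_of_le hT0 hTS1
  have hS20 : 0 < S2 := lt_of_lt_of_le hT0 hTS2
  have hdS1 : |d| ≤ S1 := by
    rw [hS1, ← Real.sqrt_sq_eq_abs]
    exact Real.sqrt_le_sqrt (by nlinarith [sq_nonneg τ])
  have hΛS2 : Λ ≤ S2 := by
    have hΛ0 : 0 ≤ Λ := le_trans hm0.le hΛm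
    calc Λ = Real.sqrt (Λ ^ 2) := (Real.sqrt_sq hΛ0).symm
      _ ≤ S2 := Real.sqrt_le_sqrt (by nlinarith [sq_nonneg τ])
  have hAle : Λ + d ≤ S1 + S2 := by
    have : d ≤ |d| := le_abs_self d
    linarith
  rw [inv_mul_eq_div, div_div, div_le_div_iff₀ (by positivity) hT0]
  calc (Λ + d) * T ≤ (S1 + S2) * T := by nlinarith
    _ = S1 * T + S2 * T := by ring
    _ ≤ S1 * S2 + S2 * S1 := by
        gcongr
    _ = 2 * (S2 * S1) := by ring

/-- There is a constant `C > 0` such that for all `τ ∈ ℝ`, `k, l ∈ ℤ` and `m ≥ 1`,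
with `Λ_m = k² + (m² + (m+1)²)/2`, one has
`|(iτ + k² + l² − Λ_m)⁻¹ · (k² + l²)/(Λ_m + iτ)| ≤ C / √(m² + τ²)`. -/
theorem low_to_high_bound :
    ∃ C : ℝ, 0 < C ∧ ∀ (τ : ℝ) (k l : ℤ) (m : ℕ), 1 ≤ m →
      ‖
        ((Complex.I * (τ : ℂ) + (k : ℂ) ^ 2 + (l : ℂ) ^ 2 -
            ((k : ℂ) ^ 2 + ((m : ℂ) ^ 2 + ((m : ℂ) + 1) ^ 2) / 2))⁻¹ *
          (((k : ℂ) ^ 2 + (l : ℂ) ^ 2) /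
            (((k : ℂ) ^ 2 + ((m : ℂ) ^ 2 + ((m : ℂ) + 1) ^ 2) / 2) + Complex.I * (τ : ℂ))))‖ ≤
        C / Real.sqrt ((m : ℝ) ^ 2 + τ ^ 2) := by
  refine ⟨2, two_pos, ?_⟩
  intro τ k l m hm
  have hm1 : (1:ℝ) ≤ (m:ℝ) := by exact_mod_cast hm
  set K : ℝ := (k:ℝ) ^ 2 with hK
  set L : ℝ := (l:ℝ) ^ 2 with hL
  set M : ℝ := ((m:ℝ) ^ 2 + ((m:ℝ) + 1) ^ 2) / 2 with hM
  have e1 : (Complex.I * (τ : ℂ) + (k : ℂ) ^ 2 + (l : ℂ) ^ 2 -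
      ((k : ℂ) ^ 2 + ((m : ℂ) ^ 2 + ((m : ℂ) + 1) ^ 2) / 2)) = ((L - M : ℝ) : ℂ) + (τ:ℝ) * Complex.I := by
    rw [hL, hM]; push_cast; ring
  have e2 : (((k : ℂ) ^ 2 + ((m : ℂ) ^ 2 + ((m : ℂ) + 1) ^ 2) / 2) + Complex.I * (τ : ℂ))
      = ((K + M : ℝ) : ℂ) + (τ:ℝ) * Complex.I := by
    rw [hK, hM]; push_cast; ring
  have e3 : ((k : ℂ) ^ 2 + (l : ℂ) ^ 2) = ((K + L : ℝ) : ℂ) := by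
    rw [hK, hL]; push_cast; ring
  rw [norm_mul, norm_inv, norm_div, e1, e2, e3, Complex.norm_add_mul_I, Complex.norm_add_mul_I,
    Complex.norm_real, Real.norm_eq_abs, abs_of_nonneg (by positivity : (0:ℝ) ≤ K + L)]
  -- reduce to the real lemma
  have hKL : K + L = (K + M) + (L - M) := by ring
  rw [hKL]
  apply low_to_high_real _ _ _ _ hm1
  · -- m ≤ |L - M|
    have key : (l:ℝ)^2 ≤ (m:ℝ)^2 ∨ ((m:ℝ)+1)^2 ≤ (l:ℝ)^2 := by
      rcases le_or_gt l.natAbs m with h | h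
      · left
        have : (l ^ 2 : ℤ) ≤ (m:ℤ) ^ 2 := by
          rw [← Int.natAbs_sq l]; exact_mod_cast Nat.pow_le_pow_left h 2
        exact_mod_cast this
      · right
        have : ((m:ℤ) + 1) ^ 2 ≤ l ^ 2 := by
          rw [← Int.natAbs_sq l]; exact_mod_cast Nat.pow_le_pow_left h 2
        exact_mod_cast this
    rcases key with h | h
    · rw [abs_sub_comm, abs_of_nonneg (by rw [hL, hM]; nlinarith)]
      rw [hL, hM]; nlinarith
    · rw [abs_of_nonneg (by rw [hL, hM]; nlinarith)]
      rw [hL, hM]; nlinarith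
  · -- m ≤ K + M
    have : (0:ℝ) ≤ K := by rw [hK]; positivity
    rw [hM]; nlinarith
  · -- 0 ≤ (K+M)+(L-M)
    have h1 : (0:ℝ) ≤ K := by rw [hK]; positivity
    have h2 : (0:ℝ) ≤ L := by rw [hL]; positivity
    linarith
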